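/- Let G be a graph on n ≥ 4 nodes (n even) with planted bisection V1, V2. Suppose G1 = G[V1] and G2 = G[V2] are both d_in-regular for some d_in ∈ {1,…,n/2 − 1}, and the crossing bipartite graph G0 is d_out-regular for some d_out ∈ {0,…,n/2}. If d_in − d_out ≥ n/4, then the cut vector x̄ of the planted bisection is the UNIQUE optimal solution of the metric LP relaxation (LP-P); i.e., the LP relaxation recovers the planted bisection. -/

import Mathlib

noncomputable section
open scoped Classical

/-- `i` and `j` lie on the same side of the planted bisection
`V₁ = {0, …, n/2 - 1}`, `V₂ = {n/2, …, n-1}`. -/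
def sameSide (n : ℕ) (i j : Fin n) : Prop :=
  ((i : ℕ) < n / 2 ↔ (j : ℕ) < n / 2)

/-- The sum of `f i j` over all unordered pairs `{i, j}` with `i < j`. -/
def pairSum (n : ℕ) (f : Fin n → Fin n → ℝ) : ℝ :=
  ∑ i : Fin n, ∑ j : Fin n, if i < j then f i j else 0

/-- Feasibility for the metric LP relaxation (LP-P): symmetry of the indexing by
unordered pairs, the triangle inequalities, the perimeter inequalities, and the
equipartition equality constraint. -/
def LPfeasible (n : ℕ) (x : Fin n → Fin n → ℝ) : Prop :=
  (∀ i j, x i j = x j i) ∧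
  (∀ i j k : Fin n, i ≠ j → i ≠ k → j ≠ k → x i j ≤ x i k + x j k) ∧
  (∀ i j k : Fin n, i < j → j < k → x i j + x i k + x j k ≤ 2) ∧
  pairSum n x = (n : ℝ) ^ 2 / 4

/-- The objective function of (LP-P): `∑_{(i,j) ∈ E} x_{ij}`, each edge counted once. -/
def LPobj (n : ℕ) (G : SimpleGraph (Fin n)) (x : Fin n → Fin n → ℝ) : ℝ :=
  ∑ i : Fin n, ∑ j : Fin n, if i < j ∧ G.Adj i j then x i j else 0

/-- The cut vector of the bisection `(S, Sᶜ)`. -/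
def cutVecOf {n : ℕ} (S : Finset (Fin n)) : Fin n → Fin n → ℝ :=
  fun i j => if (i ∈ S ↔ j ∈ S) then 0 else 1

/-- The cut vector of the planted bisection `V₁ = {0, …, n/2 - 1}`, `V₂ = {n/2, …, n-1}`. -/
def cutVec (n : ℕ) : Fin n → Fin n → ℝ :=
  fun i j => if sameSide n i j then 0 else 1

/-- The LP relaxation (LP-P) for the graph `G` recovers the bisection with cut vector
`xb`: `xb` is feasible, and it is the unique optimal solution (any feasible point
with the same objective value agrees with `xb` on all off-diagonal entries). -/
def LPrecoversOf (n : ℕ) (G : SimpleGraph (Fin n)) (xb : Fin n → Fin n → ℝ) : Prop :=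
  LPfeasible n xb ∧
  ∀ x : Fin n → Fin n → ℝ, LPfeasible n x →
    LPobj n G xb ≤ LPobj n G x ∧
    (LPobj n G x = LPobj n G xb → ∀ i j : Fin n, i ≠ j → x i j = xb i j)

/-- The LP relaxation (LP-P) for `G` recovers the planted bisection
`V₁ = {0, …, n/2 - 1}`, `V₂ = {n/2, …, n-1}`. -/
def LPrecovers (n : ℕ) (G : SimpleGraph (Fin n)) : Prop :=
  LPrecoversOf n G (cutVec n)

/-- The degree of `v` in the graph `G₁ ∪ G₂` of within-part edges of `G`
(with respect to the planted bisection into the first and second half). -/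
def inDeg (n : ℕ) (G : SimpleGraph (Fin n)) (v : Fin n) : ℕ :=
  {w : Fin n | G.Adj v w ∧ sameSide n v w}.ncard

/-- The degree of `v` in the crossing bipartite graph `G₀` of `G`
(with respect to the planted bisection into the first and second half). -/
def outDeg (n : ℕ) (G : SimpleGraph (Fin n)) (v : Fin n) : ℕ :=
  {w : Fin n | G.Adj v w ∧ ¬ sameSide n v w}.ncard

section LPaux
open Finset

def zfun (n : ℕ) (x : Fin n → Fin n → ℝ) : Fin n → Fin n → ℝ :=
  fun i j => if sameSide n i j then x i j else 1 - x i j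





lemma LPaux_ncard_eq {α : Type*} [Fintype α] (p : α → Prop) :
    {w : α | p w}.ncard = (Finset.univ.filter p).card := by
  rw [Set.ncard_eq_toFinset_card', Set.toFinset_setOf]

lemma LPaux_card_lt (n m : ℕ) (h : m ≤ n) :
    (Finset.univ.filter (fun j : Fin n => (j : ℕ) < m)).card = m := by
  rw [Finset.card_filter]
  rw [Fin.sum_univ_eq_sum_range (fun j => if j < m then (1:ℕ) else 0) n]
  rw [← Finset.card_filter]
  have : (Finset.range n).filter (fun j => j < m) = Finset.range m := by
    ext a; simp only [mem_filter, mem_range]; omega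
  rw [this, card_range]

lemma LPaux_card_sameSide {n : ℕ} (hn : Even n) (i : Fin n) :
    (Finset.univ.filter (fun j => sameSide n i j)).card = n / 2 := by
  obtain ⟨k, hk⟩ := hn
  have hm : n / 2 ≤ n := Nat.div_le_self n 2
  by_cases hi : (i : ℕ) < n / 2
  · have : (Finset.univ.filter (fun j => sameSide n i j)) =
        (Finset.univ.filter (fun j : Fin n => (j : ℕ) < n / 2)) := by
      ext a; simp only [mem_filter, mem_univ, true_and]; unfold sameSide; tauto
    rw [this, LPaux_card_lt n (n/2) hm]
  · have : (Finset.univ.filter (fun j => sameSide n i j)) =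
        (Finset.univ.filter (fun j : Fin n => (j : ℕ) < n / 2))ᶜ := by
      ext a; simp only [mem_filter, mem_compl, mem_univ, true_and]; unfold sameSide; tauto
    rw [this, Finset.card_compl, LPaux_card_lt n (n/2) hm, Fintype.card_fin]
    omega

lemma LPaux_card_crossSide {n : ℕ} (hn : Even n) (i : Fin n) :
    (Finset.univ.filter (fun j => ¬ sameSide n i j)).card = n / 2 := by
  obtain ⟨k, hk⟩ := hn
  have h2 : (Finset.univ.filter (fun j => ¬ sameSide n i j))
      = (Finset.univ.filter (fun j => sameSide n i j))ᶜ := by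
    ext a; simp [mem_filter, mem_compl]
  rw [h2, Finset.card_compl, LPaux_card_sameSide ⟨k, hk⟩ i, Fintype.card_fin]
  omega

lemma LPaux_ss_refl {n : ℕ} (i : Fin n) : sameSide n i i := Iff.rfl

lemma LPaux_ss_symm {n : ℕ} {i j : Fin n} (h : sameSide n i j) : sameSide n j i := h.symm

/-- perimeter inequality for arbitrary distinct triples -/
lemma LPaux_perim {n : ℕ} {x : Fin n → Fin n → ℝ}
    (hsym : ∀ i j, x i j = x j i)
    (hper : ∀ i j k : Fin n, i < j → j < k → x i j + x i k + x j k ≤ 2)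
    {i j k : Fin n} (hij : i ≠ j) (hik : i ≠ k) (hjk : j ≠ k) :
    x i j + x i k + x j k ≤ 2 := by
  rcases lt_trichotomy i j with h1 | h1 | h1
  · rcases lt_trichotomy j k with h2 | h2 | h2
    · exact hper i j k h1 h2
    · exact absurd h2 hjk
    · rcases lt_trichotomy i k with h3 | h3 | h3
      · have := hper i k j h3 h2
        have e1 := hsym k j; linarith
      · exact absurd h3 hik
      · have := hper k i j h3 h1
        have e1 := hsym k i; have e2 := hsym k j; linarith
  · exact absurd h1 hij
  · rcases lt_trichotomy i k with h2 | h2 | h2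
    · have := hper j i k h1 h2
      have e1 := hsym j i; linarith
    · exact absurd h2 hik
    · rcases lt_trichotomy j k with h3 | h3 | h3
      · have := hper j k i h3 h2
        have e1 := hsym j i; have e2 := hsym k i; linarith
      · exact absurd h3 hjk
      · have := hper k j i h3 h1
        have e1 := hsym k j; have e2 := hsym k i; have e3 := hsym j i; linarith



lemma LPaux_cut_pairSum {n : ℕ} (hn : Even n) : pairSum n (cutVec n) = (n : ℝ) ^ 2 / 4 := by
  obtain ⟨k, hk⟩ := hn
  have hm : n / 2 = k := by omega
  have step1 : pairSum n (cutVec n) =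
      ∑ i : Fin n, ∑ j : Fin n, if ((i : ℕ) < n / 2 ∧ ¬ ((j : ℕ) < n / 2)) then (1:ℝ) else 0 := by
    unfold pairSum cutVec
    refine Finset.sum_congr rfl fun i _ => Finset.sum_congr rfl fun j _ => ?_
    split_ifs with h1 h2 h3 <;>
      first
        | rfl
        | (exfalso; simp only [sameSide, Fin.lt_def, not_and, not_lt, not_iff, not_forall] at *; omega)
  rw [step1]
  have inner : ∀ i : Fin n, (∑ j : Fin n, if ((i : ℕ) < n / 2 ∧ ¬ ((j : ℕ) < n / 2)) then (1:ℝ) else 0)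
      = if (i : ℕ) < n / 2 then (k : ℝ) else 0 := by
    intro i
    by_cases hi : (i : ℕ) < n / 2
    · simp only [hi, true_and, if_true]
      have : (∑ j : Fin n, if ¬ ((j : ℕ) < n / 2) then (1:ℝ) else 0)
          = ((Finset.univ.filter (fun j : Fin n => ¬ ((j : ℕ) < n / 2))).card : ℝ) := by
        rw [Finset.card_filter]; push_cast; rfl
      rw [this]
      have hc : (Finset.univ.filter (fun j : Fin n => ¬ ((j : ℕ) < n / 2)))
          = (Finset.univ.filter (fun j : Fin n => (j : ℕ) < n / 2))ᶜ := by
        ext a; simp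
      rw [hc, Finset.card_compl, LPaux_card_lt n (n/2) (by omega), Fintype.card_fin]
      congr 1; omega
    · simp [hi]
  rw [Finset.sum_congr rfl fun i _ => inner i]
  have : (∑ i : Fin n, if (i : ℕ) < n / 2 then (k : ℝ) else 0)
      = ((Finset.univ.filter (fun i : Fin n => (i : ℕ) < n / 2)).card : ℝ) * k := by
    rw [← Finset.sum_filter, Finset.sum_const, nsmul_eq_mul]
  rw [this, LPaux_card_lt n (n/2) (by omega), hm, hk]
  push_cast; ring

lemma LPaux_cut_feasible {n : ℕ} (hn : Even n) : LPfeasible n (cutVec n) := by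
  refine ⟨?_, ?_, ?_, LPaux_cut_pairSum hn⟩
  · intro i j; unfold cutVec sameSide
    by_cases h : ((i : ℕ) < n / 2 ↔ (j : ℕ) < n / 2)
    · rw [if_pos h, if_pos h.symm]
    · rw [if_neg h, if_neg (fun hh => h hh.symm)]
  · intro i j k _ _ _
    by_cases h1 : sameSide n i j <;> by_cases h2 : sameSide n i k <;> by_cases h3 : sameSide n j k <;>
      first
        | (exfalso; simp_all only [sameSide]; tauto)
        | (simp [cutVec, h1, h2, h3]; try norm_num)
  · intro i j k _ _
    by_cases h1 : sameSide n i j <;> by_cases h2 : sameSide n i k <;> by_cases h3 : sameSide n j k <;>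
      first
        | (exfalso; simp_all only [sameSide]; tauto)
        | (simp [cutVec, h1, h2, h3]; try norm_num)

lemma LPaux_double {n : ℕ} (g : Fin n → Fin n → ℝ) (P : Fin n → Fin n → Prop)
    (hP : ∀ i j, P i j → P j i) (hg : ∀ i j, i ≠ j → g i j = g j i) :
    (∑ i : Fin n, ∑ j : Fin n, if i ≠ j ∧ P i j then g i j else 0)
      = 2 * ∑ i : Fin n, ∑ j : Fin n, if i < j ∧ P i j then g i j else 0 := by
  have key : ∀ i j : Fin n, (if i ≠ j ∧ P i j then g i j else 0)
      = (if i < j ∧ P i j then g i j else 0) + (if j < i ∧ P i j then g i j else 0) := by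
    intro i j
    by_cases hp : P i j
    · rcases lt_trichotomy i j with h | h | h
      · simp [h, h.ne, hp, asymm h]
      · simp [h, hp]
      · simp [h, h.ne', hp, asymm h]
    · simp [hp]
  calc (∑ i : Fin n, ∑ j : Fin n, if i ≠ j ∧ P i j then g i j else 0)
      = (∑ i : Fin n, ∑ j : Fin n, ((if i < j ∧ P i j then g i j else 0)
          + (if j < i ∧ P i j then g i j else 0))) := by
        exact Finset.sum_congr rfl fun i _ => Finset.sum_congr rfl fun j _ => key i j
    _ = (∑ i : Fin n, ∑ j : Fin n, if i < j ∧ P i j then g i j else 0)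
          + (∑ i : Fin n, ∑ j : Fin n, if j < i ∧ P i j then g i j else 0) := by
        rw [← Finset.sum_add_distrib]
        exact Finset.sum_congr rfl fun i _ => Finset.sum_add_distrib
    _ = 2 * ∑ i : Fin n, ∑ j : Fin n, if i < j ∧ P i j then g i j else 0 := by
        have : (∑ i : Fin n, ∑ j : Fin n, if j < i ∧ P i j then g i j else 0)
            = (∑ i : Fin n, ∑ j : Fin n, if i < j ∧ P i j then g i j else 0) := by
          rw [Finset.sum_comm]
          refine Finset.sum_congr rfl fun i _ => Finset.sum_congr rfl fun j _ => ?_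
          by_cases h : i < j ∧ P j i
          · rw [if_pos h, if_pos ⟨h.1, hP j i h.2⟩, hg j i h.1.ne']
          · have h2 : ¬ (i < j ∧ P i j) := fun hh => h ⟨hh.1, hP i j hh.2⟩
            rw [if_neg h, if_neg h2]
        linarith



lemma LPaux_third {n : ℕ} (hn3 : 3 ≤ n) (i j : Fin n) : ∃ k : Fin n, k ≠ i ∧ k ≠ j := by
  have hc : 0 < (({i, j} : Finset (Fin n))ᶜ).card := by
    rw [Finset.card_compl, Fintype.card_fin]
    have h1 := Finset.card_insert_le i ({j} : Finset (Fin n))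
    have h2 : ({j} : Finset (Fin n)).card = 1 := Finset.card_singleton j
    omega
  obtain ⟨k, hk⟩ := Finset.card_pos.mp hc
  simp only [Finset.mem_compl, Finset.mem_insert, Finset.mem_singleton, not_or] at hk
  exact ⟨k, hk.1, hk.2⟩

section zlem
variable {n : ℕ} {x : Fin n → Fin n → ℝ}

lemma LPaux_xnonneg (hsym : ∀ i j, x i j = x j i)
    (htri : ∀ i j k : Fin n, i ≠ j → i ≠ k → j ≠ k → x i j ≤ x i k + x j k)
    (hn3 : 3 ≤ n) {i j : Fin n} (hij : i ≠ j) : 0 ≤ x i j := by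
  obtain ⟨k, hki, hkj⟩ := LPaux_third hn3 i j
  have t1 := htri i k j hki.symm hij hkj
  have t2 := htri j k i hkj.symm hij.symm hki
  have e1 := hsym k j
  have e2 := hsym j i
  have e3 := hsym k i
  linarith

lemma LPaux_xle1 (hsym : ∀ i j, x i j = x j i)
    (htri : ∀ i j k : Fin n, i ≠ j → i ≠ k → j ≠ k → x i j ≤ x i k + x j k)
    (hper : ∀ i j k : Fin n, i ≠ j → i ≠ k → j ≠ k → x i j + x i k + x j k ≤ 2)
    (hn3 : 3 ≤ n) {i j : Fin n} (hij : i ≠ j) : x i j ≤ 1 := by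
  obtain ⟨k, hki, hkj⟩ := LPaux_third hn3 i j
  have t1 := htri i j k hij hki.symm hkj.symm
  have t2 := hper i j k hij hki.symm hkj.symm
  linarith

lemma LPaux_zsymm (hsym : ∀ i j, x i j = x j i) (i j : Fin n) :
    zfun n x i j = zfun n x j i := by
  unfold zfun
  by_cases h : sameSide n i j
  · rw [if_pos h, if_pos (show sameSide n j i from h.symm), hsym]
  · rw [if_neg h, if_neg (show ¬ sameSide n j i from fun hh => h hh.symm), hsym i j]

lemma LPaux_znonneg (hsym : ∀ i j, x i j = x j i)
    (htri : ∀ i j k : Fin n, i ≠ j → i ≠ k → j ≠ k → x i j ≤ x i k + x j k)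
    (hper : ∀ i j k : Fin n, i ≠ j → i ≠ k → j ≠ k → x i j + x i k + x j k ≤ 2)
    (hn3 : 3 ≤ n) {i j : Fin n} (hij : i ≠ j) : 0 ≤ zfun n x i j := by
  unfold zfun
  by_cases h : sameSide n i j
  · rw [if_pos h]; exact LPaux_xnonneg hsym htri hn3 hij
  · rw [if_neg h]
    have := LPaux_xle1 hsym htri hper hn3 hij
    linarith

lemma LPaux_ztri (hsym : ∀ i j, x i j = x j i)
    (htri : ∀ i j k : Fin n, i ≠ j → i ≠ k → j ≠ k → x i j ≤ x i k + x j k)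
    (hper : ∀ i j k : Fin n, i ≠ j → i ≠ k → j ≠ k → x i j + x i k + x j k ≤ 2)
    {i j k : Fin n} (hij : i ≠ j) (hik : i ≠ k) (hjk : j ≠ k) :
    zfun n x i j ≤ zfun n x i k + zfun n x j k := by
  by_cases s1 : sameSide n i j <;> by_cases s2 : sameSide n i k <;> by_cases s3 : sameSide n j k
  · simp only [zfun, if_pos s1, if_pos s2, if_pos s3]
    exact htri i j k hij hik hjk
  · exfalso; simp_all only [sameSide]; try tauto
  · exfalso; simp_all only [sameSide]; try tauto
  · simp only [zfun, if_pos s1, if_neg s2, if_neg s3]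
    have := hper i j k hij hik hjk
    linarith
  · exfalso; simp_all only [sameSide]; try tauto
  · simp only [zfun, if_neg s1, if_pos s2, if_neg s3]
    have := htri j k i hjk hij.symm hik.symm
    have e1 := hsym j i
    have e2 := hsym k i
    linarith
  · simp only [zfun, if_neg s1, if_neg s2, if_pos s3]
    have := htri i k j hik hij hjk.symm
    have e1 := hsym k j
    linarith
  · exfalso; simp_all only [sameSide]; try tauto

end zlem

lemma LPaux_card_filter_eq {α : Type*} [Fintype α] (p : α → Prop) (inst : DecidablePred p) :
    (@Finset.filter α p inst Finset.univ).card = {w : α | p w}.ncard := by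
  rw [LPaux_ncard_eq]
  congr 1
  ext a
  simp [Finset.mem_filter]

set_option maxHeartbeats 2000000 in
lemma LPaux_core {n : ℕ} (hn : Even n) (hn4 : 4 ≤ n) (G : SimpleGraph (Fin n))
    (din dout : ℕ) (hdin2 : din ≤ n / 2 - 1)
    (hreg12 : ∀ v : Fin n, inDeg n G v = din) (hreg0 : ∀ v : Fin n, outDeg n G v = dout)
    (h : (din : ℝ) - (dout : ℝ) ≥ (n : ℝ) / 4)
    (x : Fin n → Fin n → ℝ) (hx : LPfeasible n x) :
    LPobj n G (cutVec n) ≤ LPobj n G x ∧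
      (LPobj n G x = LPobj n G (cutVec n) → ∀ i j : Fin n, i ≠ j → x i j = cutVec n i j) := by
  obtain ⟨hsym, htri, hperlt, hsum⟩ := hx
  have hper : ∀ i j k : Fin n, i ≠ j → i ≠ k → j ≠ k → x i j + x i k + x j k ≤ 2 :=
    fun i j k hij hik hjk => LPaux_perim hsym hperlt hij hik hjk
  have hn3 : 3 ≤ n := by omega
  have hm : n = 2 * (n / 2) := by obtain ⟨k, hk⟩ := hn; omega
  have hMr : (n : ℝ) = 2 * ((n / 2 : ℕ) : ℝ) := by exact_mod_cast congrArg (Nat.cast (R := ℝ)) hm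
  have hMrpos : (0:ℝ) < ((n / 2 : ℕ) : ℝ) := by
    have : 0 < n / 2 := by omega
    exact_mod_cast this
  set z : Fin n → Fin n → ℝ := zfun n x with hzdef
  have zsym : ∀ i j : Fin n, z i j = z j i := by
    intro i j; rw [hzdef]; exact LPaux_zsymm hsym i j
  have znn : ∀ {i j : Fin n}, i ≠ j → 0 ≤ z i j := by
    intro i j hij; rw [hzdef]; exact LPaux_znonneg hsym htri hper hn3 hij
  have ztri : ∀ {i j k : Fin n}, i ≠ j → i ≠ k → j ≠ k → z i j ≤ z i k + z j k := by
    intro i j k hij hik hjk; rw [hzdef]; exact LPaux_ztri hsym htri hper hij hik hjk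
  -- degree cards
  have cardNI : ∀ v : Fin n,
      (Finset.univ.filter (fun w => G.Adj v w ∧ sameSide n v w)).card = din := by
    intro v
    rw [LPaux_card_filter_eq]
    exact hreg12 v
  have cardXE : ∀ v : Fin n,
      (Finset.univ.filter (fun w => G.Adj v w ∧ ¬ sameSide n v w)).card = dout := by
    intro v
    rw [LPaux_card_filter_eq]
    exact hreg0 v
  -- main sums
  set Win : ℝ := ∑ i : Fin n, ∑ j : Fin n, if i ≠ j ∧ sameSide n i j then z i j else 0 with hWin
  set Cr : ℝ := ∑ i : Fin n, ∑ j : Fin n, if ¬ sameSide n i j then z i j else 0 with hCr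
  set WE : ℝ := ∑ i : Fin n, ∑ j : Fin n, if G.Adj i j ∧ sameSide n i j then z i j else 0 with hWE
  set NE : ℝ := ∑ i : Fin n, ∑ j : Fin n, if i ≠ j ∧ ¬ G.Adj i j ∧ sameSide n i j then z i j else 0 with hNE
  set CE : ℝ := ∑ i : Fin n, ∑ j : Fin n, if G.Adj i j ∧ ¬ sameSide n i j then z i j else 0 with hCE
  set S : Fin n → ℝ := fun v => ∑ j : Fin n, if v ≠ j then z v j else 0 with hS
  have WinNonneg : 0 ≤ Win := by
    rw [hWin]
    refine Finset.sum_nonneg fun i _ => Finset.sum_nonneg fun j _ => ?_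
    split_ifs with hc
    · exact znn hc.1
    · exact le_refl 0
  have P1 : Win = WE + NE := by
    rw [hWin, hWE, hNE, ← Finset.sum_add_distrib]
    refine Finset.sum_congr rfl fun i _ => ?_
    rw [← Finset.sum_add_distrib]
    refine Finset.sum_congr rfl fun j _ => ?_
    by_cases he : i = j
    · subst he; simp [SimpleGraph.irrefl]
    · by_cases hs : sameSide n i j
      · by_cases ha : G.Adj i j <;> simp [he, hs, ha]
      · simp [he, hs]
  have P3 : ∑ v : Fin n, S v = Win + Cr := by
    rw [hWin, hCr, ← Finset.sum_add_distrib]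
    refine Finset.sum_congr rfl fun v _ => ?_
    simp only [hS]
    rw [← Finset.sum_add_distrib]
    refine Finset.sum_congr rfl fun j _ => ?_
    by_cases he : v = j
    · subst he; simp [LPaux_ss_refl]
    · by_cases hs : sameSide n v j <;> simp [he, hs]
  -- Win = Cr
  have hpair2 : (∑ i : Fin n, ∑ j : Fin n, if i ≠ j then x i j else 0) = 2 * ((n:ℝ)^2/4) := by
    have hd := LPaux_double x (fun _ _ => True) (fun _ _ _ => trivial) (fun i j _ => hsym i j)
    simp only [and_true] at hd
    rw [hd]
    have : (∑ i : Fin n, ∑ j : Fin n, if i < j then x i j else 0) = (n:ℝ)^2/4 := hsum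
    rw [this]
  have hsplitx : (∑ i : Fin n, ∑ j : Fin n, if i ≠ j then x i j else 0)
      = (∑ i : Fin n, ∑ j : Fin n, if i ≠ j ∧ sameSide n i j then x i j else 0)
        + (∑ i : Fin n, ∑ j : Fin n, if ¬ sameSide n i j then x i j else 0) := by
    rw [← Finset.sum_add_distrib]
    refine Finset.sum_congr rfl fun i _ => ?_
    rw [← Finset.sum_add_distrib]
    refine Finset.sum_congr rfl fun j _ => ?_
    by_cases he : i = j
    · subst he; simp [LPaux_ss_refl]
    · by_cases hs : sameSide n i j <;> simp [he, hs]
  have hWinx : (∑ i : Fin n, ∑ j : Fin n, if i ≠ j ∧ sameSide n i j then x i j else 0) = Win := by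
    rw [hWin]
    refine Finset.sum_congr rfl fun i _ => Finset.sum_congr rfl fun j _ => ?_
    by_cases hc : i ≠ j ∧ sameSide n i j
    · rw [if_pos hc, if_pos hc, hzdef]
      simp [zfun, hc.2]
    · rw [if_neg hc, if_neg hc]
  have hCrx : Cr = (∑ i : Fin n, ∑ j : Fin n, if ¬ sameSide n i j then (1:ℝ) else 0)
      - (∑ i : Fin n, ∑ j : Fin n, if ¬ sameSide n i j then x i j else 0) := by
    rw [hCr, ← Finset.sum_sub_distrib]
    refine Finset.sum_congr rfl fun i _ => ?_
    rw [← Finset.sum_sub_distrib]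
    refine Finset.sum_congr rfl fun j _ => ?_
    by_cases hs : sameSide n i j
    · simp [hs]
    · rw [if_pos hs, if_pos hs, if_pos hs, hzdef]
      simp [zfun, hs]
  have hones : (∑ i : Fin n, ∑ j : Fin n, if ¬ sameSide n i j then (1:ℝ) else 0)
      = (n : ℝ)^2 / 2 := by
    have inner : ∀ i : Fin n, (∑ j : Fin n, if ¬ sameSide n i j then (1:ℝ) else 0)
        = ((n/2 : ℕ) : ℝ) := by
      intro i
      rw [Finset.sum_boole, LPaux_card_crossSide hn i]
    rw [Finset.sum_congr rfl fun i _ => inner i, Finset.sum_const, Finset.card_univ,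
      Fintype.card_fin, nsmul_eq_mul]
    rw [hMr]; ring
  have P4 : Cr = Win := by
    rw [hCrx, hones, ← hWinx]
    linarith [hsplitx, hpair2]
  -- pointwise bound for cross pairs
  have P5 : ∀ i k : Fin n, i ≠ k → (n : ℝ) * z i k ≤ S i + S k := by
    intro i k hik
    set D : Finset (Fin n) := (Finset.univ.erase i).erase k with hD
    have hDcard : D.card = n - 2 := by
      rw [hD, Finset.card_erase_of_mem (by simp [hik.symm]), Finset.card_erase_of_mem (by simp),
        Finset.card_univ, Fintype.card_fin]
      omega
    have hstep : ∀ j ∈ D, z i k ≤ z i j + z k j := by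
      intro j hj
      rw [hD, Finset.mem_erase, Finset.mem_erase] at hj
      exact ztri hik (Ne.symm hj.2.1) (Ne.symm hj.1)
    have hsum1 := Finset.sum_le_sum hstep
    rw [Finset.sum_const, nsmul_eq_mul, hDcard] at hsum1
    rw [Finset.sum_add_distrib] at hsum1
    have hSgen : ∀ v w : Fin n, v ≠ w →
        S v = z v w + ∑ j ∈ (Finset.univ.erase v).erase w, z v j := by
      intro v w hvw
      simp only [hS]
      rw [← Finset.sum_filter]
      have e1 : Finset.univ.filter (fun j : Fin n => v ≠ j) = Finset.univ.erase v := by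
        ext a; simp [ne_comm]
      rw [e1]
      exact (Finset.add_sum_erase _ _ (by simp [hvw.symm])).symm
    have hSi := hSgen i k hik
    have hSk := hSgen k i hik.symm
    have herase : (Finset.univ.erase k).erase i = D := by
      rw [hD]; ext a; simp only [Finset.mem_erase, Finset.mem_univ, and_true]; tauto
    rw [herase] at hSk
    have hcast : ((n - 2 : ℕ) : ℝ) = (n : ℝ) - 2 := by
      have h2 : (2:ℕ) ≤ n := by omega
      rw [Nat.cast_sub h2]; norm_num
    rw [hcast] at hsum1
    have hzki : z k i = z i k := zsym k i
    linarith [hsum1, hSi, hSk]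
  -- summed cross-edge bound
  have P6 : (n:ℝ) * CE ≤ 2 * (dout:ℝ) * (Win + Cr) := by
    have step1 : (n:ℝ) * CE
        = ∑ i : Fin n, ∑ k : Fin n, if G.Adj i k ∧ ¬ sameSide n i k then (n:ℝ) * z i k else 0 := by
      rw [hCE, Finset.mul_sum]
      refine Finset.sum_congr rfl fun i _ => ?_
      rw [Finset.mul_sum]
      exact Finset.sum_congr rfl fun k _ => by rw [mul_ite, mul_zero]
    have step2 : (∑ i : Fin n, ∑ k : Fin n, if G.Adj i k ∧ ¬ sameSide n i k then (n:ℝ) * z i k else 0)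
        ≤ ∑ i : Fin n, ∑ k : Fin n, if G.Adj i k ∧ ¬ sameSide n i k then S i + S k else 0 := by
      refine Finset.sum_le_sum fun i _ => Finset.sum_le_sum fun k _ => ?_
      split_ifs with hc
      · exact P5 i k hc.1.ne
      · exact le_refl 0
    have step3 : (∑ i : Fin n, ∑ k : Fin n, if G.Adj i k ∧ ¬ sameSide n i k then S i + S k else 0)
        = (∑ i : Fin n, ∑ k : Fin n, if G.Adj i k ∧ ¬ sameSide n i k then S i else 0)
          + (∑ i : Fin n, ∑ k : Fin n, if G.Adj i k ∧ ¬ sameSide n i k then S k else 0) := by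
      rw [← Finset.sum_add_distrib]
      refine Finset.sum_congr rfl fun i _ => ?_
      rw [← Finset.sum_add_distrib]
      refine Finset.sum_congr rfl fun k _ => ?_
      split_ifs <;> simp
    have e1 : (∑ i : Fin n, ∑ k : Fin n, if G.Adj i k ∧ ¬ sameSide n i k then S i else 0)
        = (dout:ℝ) * ∑ v : Fin n, S v := by
      rw [Finset.mul_sum]
      refine Finset.sum_congr rfl fun i _ => ?_
      rw [← Finset.sum_filter, Finset.sum_const, nsmul_eq_mul, cardXE i]
    have e2 : (∑ i : Fin n, ∑ k : Fin n, if G.Adj i k ∧ ¬ sameSide n i k then S k else 0)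
        = (dout:ℝ) * ∑ v : Fin n, S v := by
      rw [Finset.sum_comm, Finset.mul_sum]
      refine Finset.sum_congr rfl fun k _ => ?_
      have hfe : (Finset.univ.filter (fun i => G.Adj i k ∧ ¬ sameSide n i k))
          = (Finset.univ.filter (fun i => G.Adj k i ∧ ¬ sameSide n k i)) := by
        ext a
        simp only [Finset.mem_filter, Finset.mem_univ, true_and]
        constructor
        · rintro ⟨h1, h2⟩; exact ⟨h1.symm, fun hh => h2 hh.symm⟩
        · rintro ⟨h1, h2⟩; exact ⟨h1.symm, fun hh => h2 hh.symm⟩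
      rw [← Finset.sum_filter, hfe, Finset.sum_const, nsmul_eq_mul, cardXE k]
    rw [step1, ← P3]
    calc (∑ i : Fin n, ∑ k : Fin n, if G.Adj i k ∧ ¬ sameSide n i k then (n:ℝ) * z i k else 0)
        ≤ _ := step2
      _ = _ + _ := step3
      _ = (dout:ℝ) * ∑ v : Fin n, S v + (dout:ℝ) * ∑ v : Fin n, S v := by rw [e1, e2]
      _ = 2 * (dout:ℝ) * ∑ v : Fin n, S v := by ring
  -- within-side non-neighbor count
  have cardNN : ∀ v : Fin n,
      (Finset.univ.filter (fun w => v ≠ w ∧ ¬ G.Adj v w ∧ sameSide n v w)).card + din + 1 ≤ n / 2 := by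
    intro v
    set A := Finset.univ.filter (fun w => v ≠ w ∧ ¬ G.Adj v w ∧ sameSide n v w) with hA
    set B := Finset.univ.filter (fun w => G.Adj v w ∧ sameSide n v w) with hB
    have hdisj : Disjoint A B := by
      rw [Finset.disjoint_left]
      intro a ha hb
      rw [hA, Finset.mem_filter] at ha
      rw [hB, Finset.mem_filter] at hb
      exact ha.2.2.1 hb.2.1
    have hvnot : v ∉ A ∪ B := by
      rw [Finset.mem_union, hA, hB, Finset.mem_filter, Finset.mem_filter]
      rintro (⟨-, hv, -⟩ | ⟨-, hv, -⟩)
      · exact hv rfl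
      · exact G.irrefl hv
    have hsub : insert v (A ∪ B) ⊆ Finset.univ.filter (fun w => sameSide n v w) := by
      intro a ha
      rw [Finset.mem_insert, Finset.mem_union] at ha
      rw [Finset.mem_filter]
      refine ⟨Finset.mem_univ a, ?_⟩
      rcases ha with rfl | ha | ha
      · exact LPaux_ss_refl a
      · rw [hA, Finset.mem_filter] at ha; exact ha.2.2.2
      · rw [hB, Finset.mem_filter] at ha; exact ha.2.2
    have hle := Finset.card_le_card hsub
    rw [Finset.card_insert_of_notMem hvnot, Finset.card_union_of_disjoint hdisj,
      cardNI v, LPaux_card_sameSide hn v] at hle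
    omega
  -- common within-neighbor count
  have cardCN : ∀ i k : Fin n, i ≠ k → ¬ G.Adj i k → sameSide n i k →
      2 * din + 2 ≤ (Finset.univ.filter
        (fun j => (G.Adj i j ∧ sameSide n i j) ∧ (G.Adj k j ∧ sameSide n k j))).card + n / 2 := by
    intro i k hik hnadj hs
    set A := Finset.univ.filter (fun j => G.Adj i j ∧ sameSide n i j) with hA
    set B := Finset.univ.filter (fun j => G.Adj k j ∧ sameSide n k j) with hB
    have hABf : Finset.univ.filter
        (fun j => (G.Adj i j ∧ sameSide n i j) ∧ (G.Adj k j ∧ sameSide n k j)) = A ∩ B := by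
      rw [hA, hB]; ext a
      simp only [Finset.mem_filter, Finset.mem_inter, Finset.mem_univ, true_and]
      try tauto
    have hcui : (A ∩ B).card + (A ∪ B).card = din + din := by
      rw [Finset.card_inter_add_card_union, hA, hB, cardNI i, cardNI k]
    have hknot : k ∉ A ∪ B := by
      rw [Finset.mem_union, hA, hB, Finset.mem_filter, Finset.mem_filter]
      rintro (⟨-, hv, -⟩ | ⟨-, hv, -⟩)
      · exact hnadj hv
      · exact G.irrefl hv
    have hinot : i ∉ insert k (A ∪ B) := by
      rw [Finset.mem_insert, Finset.mem_union, hA, hB, Finset.mem_filter, Finset.mem_filter]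
      rintro (rfl | ⟨-, hv, -⟩ | ⟨-, hv, -⟩)
      · exact hik rfl
      · exact G.irrefl hv
      · exact hnadj hv.symm
    have hsub : insert i (insert k (A ∪ B)) ⊆ Finset.univ.filter (fun w => sameSide n i w) := by
      intro a ha
      rw [Finset.mem_insert, Finset.mem_insert, Finset.mem_union] at ha
      rw [Finset.mem_filter]
      refine ⟨Finset.mem_univ a, ?_⟩
      rcases ha with rfl | rfl | ha | ha
      · exact LPaux_ss_refl a
      · exact hs
      · rw [hA, Finset.mem_filter] at ha; exact ha.2.2
      · rw [hB, Finset.mem_filter] at ha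
        have h1 : sameSide n k a := ha.2.2
        simp only [sameSide] at hs h1 ⊢; tauto
    have hle := Finset.card_le_card hsub
    rw [Finset.card_insert_of_notMem hinot, Finset.card_insert_of_notMem hknot,
      LPaux_card_sameSide hn i] at hle
    rw [hABf]
    omega
  -- pointwise common-neighbor inequality
  have P7 : ∀ i k : Fin n, i ≠ k → ¬ G.Adj i k → sameSide n i k →
      (2*(din:ℝ) + 2 - ((n/2 : ℕ):ℝ)) * z i k
        ≤ ∑ j ∈ Finset.univ.filter
            (fun j => (G.Adj i j ∧ sameSide n i j) ∧ (G.Adj k j ∧ sameSide n k j)),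
            (z i j + z k j) := by
    intro i k hik hna hs
    set C := Finset.univ.filter
      (fun j => (G.Adj i j ∧ sameSide n i j) ∧ (G.Adj k j ∧ sameSide n k j)) with hC
    have h1 : ∀ j ∈ C, z i k ≤ z i j + z k j := by
      intro j hj
      rw [hC, Finset.mem_filter] at hj
      exact ztri hik hj.2.1.1.ne hj.2.2.1.ne
    have h2 := Finset.sum_le_sum h1
    rw [Finset.sum_const, nsmul_eq_mul] at h2
    have h3 : (2*(din:ℝ) + 2 - ((n/2 : ℕ):ℝ)) ≤ (C.card : ℝ) := by
      have hcc := cardCN i k hik hna hs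
      rw [← hC] at hcc
      have hcast : ((2 * din + 2 : ℕ) : ℝ) ≤ ((C.card + n / 2 : ℕ) : ℝ) := Nat.cast_le.mpr hcc
      push_cast at hcast
      linarith
    have h4 := mul_le_mul_of_nonneg_right h3 (znn hik)
    linarith
  -- summed within non-edge bound
  have P8 : (2*(din:ℝ) + 2 - ((n/2 : ℕ):ℝ)) * NE ≤ 2 * ((((n/2 : ℕ)):ℝ) - 1 - (din:ℝ)) * WE := by
    have s1 : (2*(din:ℝ) + 2 - ((n/2 : ℕ):ℝ)) * NE
        = ∑ i : Fin n, ∑ k : Fin n, if i ≠ k ∧ ¬ G.Adj i k ∧ sameSide n i k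
            then (2*(din:ℝ) + 2 - ((n/2 : ℕ):ℝ)) * z i k else 0 := by
      rw [hNE, Finset.mul_sum]
      refine Finset.sum_congr rfl fun i _ => ?_
      rw [Finset.mul_sum]
      exact Finset.sum_congr rfl fun k _ => by rw [mul_ite, mul_zero]
    have s2 : (∑ i : Fin n, ∑ k : Fin n, if i ≠ k ∧ ¬ G.Adj i k ∧ sameSide n i k
            then (2*(din:ℝ) + 2 - ((n/2 : ℕ):ℝ)) * z i k else 0)
        ≤ ∑ i : Fin n, ∑ k : Fin n, if i ≠ k ∧ ¬ G.Adj i k ∧ sameSide n i k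
            then (∑ j ∈ Finset.univ.filter
              (fun j => (G.Adj i j ∧ sameSide n i j) ∧ (G.Adj k j ∧ sameSide n k j)),
              (z i j + z k j)) else 0 := by
      refine Finset.sum_le_sum fun i _ => Finset.sum_le_sum fun k _ => ?_
      split_ifs with hc
      · exact P7 i k hc.1 hc.2.1 hc.2.2
      · exact le_refl 0
    have s3 : ∀ i k : Fin n, (if i ≠ k ∧ ¬ G.Adj i k ∧ sameSide n i k
          then (∑ j ∈ Finset.univ.filter
            (fun j => (G.Adj i j ∧ sameSide n i j) ∧ (G.Adj k j ∧ sameSide n k j)),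
            (z i j + z k j)) else 0)
        = (∑ j : Fin n, if (i ≠ k ∧ ¬ G.Adj i k ∧ sameSide n i k)
              ∧ (G.Adj i j ∧ sameSide n i j) ∧ (G.Adj k j ∧ sameSide n k j)
            then z i j else 0)
          + (∑ j : Fin n, if (i ≠ k ∧ ¬ G.Adj i k ∧ sameSide n i k)
              ∧ (G.Adj i j ∧ sameSide n i j) ∧ (G.Adj k j ∧ sameSide n k j)
            then z k j else 0) := by
      intro i k
      by_cases hc : i ≠ k ∧ ¬ G.Adj i k ∧ sameSide n i k
      · rw [if_pos hc, Finset.sum_filter, ← Finset.sum_add_distrib]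
        refine Finset.sum_congr rfl fun j _ => ?_
        by_cases hj : (G.Adj i j ∧ sameSide n i j) ∧ (G.Adj k j ∧ sameSide n k j)
        · rw [if_pos hj, if_pos ⟨hc, hj⟩, if_pos ⟨hc, hj⟩]
        · rw [if_neg hj, if_neg (fun hh => hj hh.2), if_neg (fun hh => hj hh.2)]
          norm_num
      · rw [if_neg hc,
          Finset.sum_eq_zero fun j _ => if_neg (fun hh => hc hh.1),
          Finset.sum_eq_zero fun j _ => if_neg (fun hh => hc hh.1)]
        norm_num
    have s4 : ∀ (w : Fin n → Fin n → ℝ), (∀ i j : Fin n, G.Adj i j ∧ sameSide n i j → 0 ≤ w i j) →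
        (∑ i : Fin n, ∑ j : Fin n, ∑ k : Fin n, if (i ≠ k ∧ ¬ G.Adj i k ∧ sameSide n i k)
              ∧ (G.Adj i j ∧ sameSide n i j) ∧ (G.Adj k j ∧ sameSide n k j)
            then w i j else 0)
        ≤ ((((n/2 : ℕ)):ℝ) - 1 - (din:ℝ)) *
            ∑ i : Fin n, ∑ j : Fin n, if G.Adj i j ∧ sameSide n i j then w i j else 0 := by
      intro w hw
      rw [Finset.mul_sum]
      refine Finset.sum_le_sum fun i _ => ?_
      rw [Finset.mul_sum]
      refine Finset.sum_le_sum fun j _ => ?_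
      have inner : (∑ k : Fin n, if (i ≠ k ∧ ¬ G.Adj i k ∧ sameSide n i k)
              ∧ (G.Adj i j ∧ sameSide n i j) ∧ (G.Adj k j ∧ sameSide n k j)
            then w i j else 0)
          = ((Finset.univ.filter (fun k => (i ≠ k ∧ ¬ G.Adj i k ∧ sameSide n i k)
              ∧ (G.Adj i j ∧ sameSide n i j) ∧ (G.Adj k j ∧ sameSide n k j))).card : ℝ) * w i j := by
        rw [← Finset.sum_filter, Finset.sum_const, nsmul_eq_mul]
      rw [inner]
      by_cases hij : G.Adj i j ∧ sameSide n i j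
      · rw [if_pos hij]
        have hsubk : (Finset.univ.filter (fun k => (i ≠ k ∧ ¬ G.Adj i k ∧ sameSide n i k)
              ∧ (G.Adj i j ∧ sameSide n i j) ∧ (G.Adj k j ∧ sameSide n k j)))
            ⊆ Finset.univ.filter (fun k => i ≠ k ∧ ¬ G.Adj i k ∧ sameSide n i k) :=
          fun a ha => by simp only [Finset.mem_filter] at ha ⊢; exact ⟨ha.1, ha.2.1⟩
        have hcle := Finset.card_le_card hsubk
        have hNNle := cardNN i
        have hcr : ((Finset.univ.filter (fun k => (i ≠ k ∧ ¬ G.Adj i k ∧ sameSide n i k)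
              ∧ (G.Adj i j ∧ sameSide n i j) ∧ (G.Adj k j ∧ sameSide n k j))).card : ℝ)
            ≤ (((n/2 : ℕ)):ℝ) - 1 - (din:ℝ) := by
          have hnat : (Finset.univ.filter (fun k => (i ≠ k ∧ ¬ G.Adj i k ∧ sameSide n i k)
              ∧ (G.Adj i j ∧ sameSide n i j) ∧ (G.Adj k j ∧ sameSide n k j))).card + din + 1
              ≤ n / 2 := le_trans (by omega) hNNle
          have := (Nat.cast_le (α := ℝ)).mpr hnat
          push_cast at this
          linarith
        exact mul_le_mul_of_nonneg_right hcr (hw i j hij)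
      · have hempty : (Finset.univ.filter (fun k => (i ≠ k ∧ ¬ G.Adj i k ∧ sameSide n i k)
              ∧ (G.Adj i j ∧ sameSide n i j) ∧ (G.Adj k j ∧ sameSide n k j))) = ∅ := by
          rw [Finset.filter_eq_empty_iff]
          intro k _
          exact fun hh => hij hh.2.1
        rw [hempty, if_neg hij]
        norm_num
    -- the two triple sums
    have sA : (∑ i : Fin n, ∑ k : Fin n, ∑ j : Fin n, if (i ≠ k ∧ ¬ G.Adj i k ∧ sameSide n i k)
              ∧ (G.Adj i j ∧ sameSide n i j) ∧ (G.Adj k j ∧ sameSide n k j)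
            then z i j else 0)
        = (∑ i : Fin n, ∑ j : Fin n, ∑ k : Fin n, if (i ≠ k ∧ ¬ G.Adj i k ∧ sameSide n i k)
              ∧ (G.Adj i j ∧ sameSide n i j) ∧ (G.Adj k j ∧ sameSide n k j)
            then z i j else 0) :=
      Finset.sum_congr rfl fun i _ => Finset.sum_comm
    have sB : (∑ i : Fin n, ∑ k : Fin n, ∑ j : Fin n, if (i ≠ k ∧ ¬ G.Adj i k ∧ sameSide n i k)
              ∧ (G.Adj i j ∧ sameSide n i j) ∧ (G.Adj k j ∧ sameSide n k j)
            then z k j else 0)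
        = (∑ i : Fin n, ∑ k : Fin n, ∑ j : Fin n, if (i ≠ k ∧ ¬ G.Adj i k ∧ sameSide n i k)
              ∧ (G.Adj i j ∧ sameSide n i j) ∧ (G.Adj k j ∧ sameSide n k j)
            then z i j else 0) := by
      rw [Finset.sum_comm]
      refine Finset.sum_congr rfl fun a _ => Finset.sum_congr rfl fun b _ =>
        Finset.sum_congr rfl fun j _ => ?_
      refine if_congr ?_ rfl rfl
      constructor
      · rintro ⟨⟨h1, h2, h3⟩, h4, h5⟩
        exact ⟨⟨h1.symm, fun hh => h2 hh.symm, h3.symm⟩, h5, h4⟩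
      · rintro ⟨⟨h1, h2, h3⟩, h4, h5⟩
        exact ⟨⟨h1.symm, fun hh => h2 hh.symm, h3.symm⟩, h5, h4⟩
    have hwz : ∀ i j : Fin n, G.Adj i j ∧ sameSide n i j → 0 ≤ z i j :=
      fun i j hij => znn hij.1.ne
    have hbound := s4 z hwz
    calc (2*(din:ℝ) + 2 - ((n/2 : ℕ):ℝ)) * NE
        ≤ ∑ i : Fin n, ∑ k : Fin n, if i ≠ k ∧ ¬ G.Adj i k ∧ sameSide n i k
            then (∑ j ∈ Finset.univ.filter
              (fun j => (G.Adj i j ∧ sameSide n i j) ∧ (G.Adj k j ∧ sameSide n k j)),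
              (z i j + z k j)) else 0 := by rw [s1]; exact s2
      _ = (∑ i : Fin n, ∑ k : Fin n, ∑ j : Fin n, if (i ≠ k ∧ ¬ G.Adj i k ∧ sameSide n i k)
              ∧ (G.Adj i j ∧ sameSide n i j) ∧ (G.Adj k j ∧ sameSide n k j)
            then z i j else 0)
          + (∑ i : Fin n, ∑ k : Fin n, ∑ j : Fin n, if (i ≠ k ∧ ¬ G.Adj i k ∧ sameSide n i k)
              ∧ (G.Adj i j ∧ sameSide n i j) ∧ (G.Adj k j ∧ sameSide n k j)
            then z k j else 0) := by
          rw [← Finset.sum_add_distrib]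
          refine Finset.sum_congr rfl fun i _ => ?_
          rw [← Finset.sum_add_distrib]
          exact Finset.sum_congr rfl fun k _ => s3 i k
      _ ≤ ((((n/2 : ℕ)):ℝ) - 1 - (din:ℝ)) * WE + ((((n/2 : ℕ)):ℝ) - 1 - (din:ℝ)) * WE := by
          rw [sA, sB, sA]
          rw [hWE]
          exact add_le_add hbound hbound
      _ = 2 * ((((n/2 : ℕ)):ℝ) - 1 - (din:ℝ)) * WE := by ring
  -- assemble the key inequality
  have hNEeq : NE = Win - WE := by linarith [P1]
  have hkey1 : (2*(din:ℝ) + 2 - ((n/2 : ℕ):ℝ)) * Win ≤ ((n/2 : ℕ):ℝ) * WE := by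
    rw [hNEeq] at P8
    nlinarith [P8]
  have hkey2 : ((n/2 : ℕ):ℝ) * CE ≤ 2*(dout:ℝ)*Win := by
    rw [P4, hMr] at P6
    linarith
  have hco : (0:ℝ) ≤ 2*(din:ℝ) - 2*(dout:ℝ) - ((n/2 : ℕ):ℝ) := by
    have hh := h
    rw [hMr] at hh
    linarith
  have hprod : (0:ℝ) ≤ (2*(din:ℝ) - 2*(dout:ℝ) - ((n/2 : ℕ):ℝ)) * Win :=
    mul_nonneg hco WinNonneg
  have hkey3 : ((n/2 : ℕ):ℝ) * (WE - CE) ≥ 2 * Win := by nlinarith [hkey1, hkey2, hprod]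
  -- relate to objectives
  have d2 := LPaux_double (fun i j => x i j - cutVec n i j) G.Adj
    (fun i j hh => hh.symm)
    (fun i j hij => by
      show x i j - cutVec n i j = x j i - cutVec n j i
      rw [hsym i j, (LPaux_cut_feasible hn).1 i j])
  have d1 : (∑ i : Fin n, ∑ j : Fin n, if i ≠ j ∧ G.Adj i j then (x i j - cutVec n i j) else 0)
      = WE - CE := by
    rw [hWE, hCE, ← Finset.sum_sub_distrib]
    refine Finset.sum_congr rfl fun i _ => ?_
    rw [← Finset.sum_sub_distrib]
    refine Finset.sum_congr rfl fun j _ => ?_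
    by_cases ha : G.Adj i j
    · have hne : i ≠ j := ha.ne
      by_cases hs : sameSide n i j
      · simp only [hzdef, zfun, cutVec, hne, ha, hs, if_true, and_true, true_and,
          not_true, if_false, ne_eq, not_false_iff]
        try norm_num
      · simp only [hzdef, zfun, cutVec, hne, ha, hs, if_true, and_true, true_and,
          if_false, ne_eq, not_false_iff]
        try norm_num
    · simp [ha]
  have d3 : (∑ i : Fin n, ∑ j : Fin n, if i < j ∧ G.Adj i j then (x i j - cutVec n i j) else 0)
      = LPobj n G x - LPobj n G (cutVec n) := by
    unfold LPobj
    rw [← Finset.sum_sub_distrib]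
    refine Finset.sum_congr rfl fun i _ => ?_
    rw [← Finset.sum_sub_distrib]
    refine Finset.sum_congr rfl fun j _ => ?_
    split_ifs with hc
    · rfl
    · norm_num
  have P10 : WE - CE = 2 * (LPobj n G x - LPobj n G (cutVec n)) := by
    rw [← d1, d2, d3]
  have hdiff : 0 ≤ WE - CE := by
    by_contra hcon
    push_neg at hcon
    have hneg : ((n/2 : ℕ):ℝ) * (WE - CE) < 0 := mul_neg_of_pos_of_neg hMrpos hcon
    linarith [hkey3, WinNonneg]
  constructor
  · linarith [P10, hdiff]
  · intro heq i j hij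
    have h0 : WE - CE = 0 := by rw [P10, heq]; ring
    have h5 : ((n/2 : ℕ):ℝ) * (WE - CE) = 0 := by rw [h0]; ring
    have hWin0 : Win = 0 := by linarith [hkey3, WinNonneg]
    have hCr0 : Cr = 0 := by rw [P4]; exact hWin0
    have hz0same : ∀ a b : Fin n, a ≠ b → sameSide n a b → z a b = 0 := by
      intro a b hab hs
      have houter : ∀ i ∈ (Finset.univ : Finset (Fin n)),
          (0:ℝ) ≤ ∑ j : Fin n, if i ≠ j ∧ sameSide n i j then z i j else 0 := by
        intro i _
        refine Finset.sum_nonneg fun j _ => ?_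
        split_ifs with hc
        · exact znn hc.1
        · exact le_refl 0
      have h1 := (Finset.sum_eq_zero_iff_of_nonneg houter).mp (by rw [← hWin]; exact hWin0)
        a (Finset.mem_univ a)
      have hinner : ∀ j ∈ (Finset.univ : Finset (Fin n)),
          (0:ℝ) ≤ if a ≠ j ∧ sameSide n a j then z a j else 0 := by
        intro j _
        split_ifs with hc
        · exact znn hc.1
        · exact le_refl 0
      have h2 := (Finset.sum_eq_zero_iff_of_nonneg hinner).mp h1 b (Finset.mem_univ b)
      rw [if_pos ⟨hab, hs⟩] at h2
      exact h2
    have hz0cross : ∀ a b : Fin n, ¬ sameSide n a b → z a b = 0 := by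
      intro a b hs
      have hab : a ≠ b := fun hh => hs (hh ▸ LPaux_ss_refl a)
      have houter : ∀ i ∈ (Finset.univ : Finset (Fin n)),
          (0:ℝ) ≤ ∑ j : Fin n, if ¬ sameSide n i j then z i j else 0 := by
        intro i _
        refine Finset.sum_nonneg fun j _ => ?_
        split_ifs with hc <;>
          first
            | exact le_refl (0:ℝ)
            | (refine znn fun hh => ?_; subst hh; exact hc (LPaux_ss_refl _))
      have h1 := (Finset.sum_eq_zero_iff_of_nonneg houter).mp (by rw [← hCr]; exact hCr0)
        a (Finset.mem_univ a)
      have hinner : ∀ j ∈ (Finset.univ : Finset (Fin n)),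
          (0:ℝ) ≤ if ¬ sameSide n a j then z a j else 0 := by
        intro j _
        split_ifs with hc <;>
          first
            | exact le_refl (0:ℝ)
            | (refine znn fun hh => ?_; subst hh; exact hc (LPaux_ss_refl _))
      have h2 := (Finset.sum_eq_zero_iff_of_nonneg hinner).mp h1 b (Finset.mem_univ b)
      rw [if_pos hs] at h2
      exact h2
    by_cases hs : sameSide n i j
    · have hz := hz0same i j hij hs
      rw [hzdef] at hz
      simp only [zfun, if_pos hs] at hz
      simp only [cutVec, if_pos hs]
      exact hz
    · have hz := hz0cross i j hs
      rw [hzdef] at hz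
      simp only [zfun, if_neg hs] at hz
      simp only [cutVec, if_neg hs]
      linarith

end LPaux

/-- If `G₁` and `G₂` are `d_in`-regular with
`d_in ∈ {1, …, n/2 - 1}`, `G₀` is `d_out`-regular with `d_out ∈ {0, …, n/2}`, and
`d_in - d_out ≥ n/4`, then the cut vector of the planted bisection is the unique
optimal solution of the metric LP relaxation (LP-P), i.e. the LP relaxation
recovers the planted bisection. -/
theorem lp_uniqueness_regular (n : ℕ) (hn : Even n) (hn4 : 4 ≤ n)
    (G : SimpleGraph (Fin n)) (din dout : ℕ)
    (hdin1 : 1 ≤ din) (hdin2 : din ≤ n / 2 - 1) (hdout : dout ≤ n / 2)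
    (hreg12 : ∀ v : Fin n, inDeg n G v = din)
    (hreg0 : ∀ v : Fin n, outDeg n G v = dout)
    (h : (din : ℝ) - (dout : ℝ) ≥ (n : ℝ) / 4) :
    LPrecovers n G :=
  ⟨LPaux_cut_feasible hn, fun x hx => LPaux_core hn hn4 G din dout hdin2 hreg12 hreg0 h x hx⟩
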